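/- Let T > 0, λ ≥ 1, g ∈ ℝ³, K > 0, L ≥ 0, and let u : [0,T] × ℝ³ → ℝ³ be continuous with |u(s,x) − u(s,y)| ≤ L·|x − y| for all s ∈ [0,T] and x, y ∈ ℝ³. Let y ∈ ℝ³ and v₁, v₂ ∈ ℝ³, and for i = 1, 2 let (X_i, V_i) : [0,T] → ℝ³ × ℝ³ be differentiable solutions of the characteristic system X_i'(s) = V_i(s), V_i'(s) = λ(g + u(s, X_i(s)) − V_i(s)) with X_i(0) = y, V_i(0) = v_i. Assume |V_i(s)| ≤ K for all s ∈ [0,T] and i = 1, 2. Then for all t ∈ [0,T]: |X₁(t) − X₂(t)| ≤ (4K/λ)·e^{L t}. -/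

import Mathlib

open Set

local notation "E3" => EuclideanSpace ℝ (Fin 3)

/-- If `u(s,·)` is `L`-Lipschitz, `λ ≥ 1`, and `(Xᵢ, Vᵢ)` solve the
characteristic system with the same initial position `y` and velocities `vᵢ`, with
`|Vᵢ| ≤ K` throughout, then `|X₁(t) − X₂(t)| ≤ (4K/λ) e^{Lt}`. -/
theorem trajectories_close
    (T lam : ℝ) (hT : 0 < T) (hlam : 1 ≤ lam) (g : E3) (K L : ℝ)
    (hK : 0 < K) (hL : 0 ≤ L)
    (u : ℝ → E3 → E3) (hucont : Continuous fun p : ℝ × E3 => u p.1 p.2)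
    (hulip : ∀ s ∈ Icc (0 : ℝ) T, ∀ x y : E3, ‖u s x - u s y‖ ≤ L * ‖x - y‖)
    (y v₁ v₂ : E3) (X₁ V₁ X₂ V₂ : ℝ → E3)
    (hX₁ : ∀ s ∈ Icc (0 : ℝ) T, HasDerivWithinAt X₁ (V₁ s) (Icc 0 T) s)
    (hV₁ : ∀ s ∈ Icc (0 : ℝ) T,
      HasDerivWithinAt V₁ (lam • (g + u s (X₁ s) - V₁ s)) (Icc 0 T) s)
    (hX₂ : ∀ s ∈ Icc (0 : ℝ) T, HasDerivWithinAt X₂ (V₂ s) (Icc 0 T) s)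
    (hV₂ : ∀ s ∈ Icc (0 : ℝ) T,
      HasDerivWithinAt V₂ (lam • (g + u s (X₂ s) - V₂ s)) (Icc 0 T) s)
    (hX₁0 : X₁ 0 = y) (hV₁0 : V₁ 0 = v₁) (hX₂0 : X₂ 0 = y) (hV₂0 : V₂ 0 = v₂)
    (hV₁bd : ∀ s ∈ Icc (0 : ℝ) T, ‖V₁ s‖ ≤ K)
    (hV₂bd : ∀ s ∈ Icc (0 : ℝ) T, ‖V₂ s‖ ≤ K) :
    ∀ t ∈ Icc (0 : ℝ) T, ‖X₁ t - X₂ t‖ ≤ 4 * K / lam * Real.exp (L * t) := by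
  have hlam0 : (0 : ℝ) < lam := lt_of_lt_of_le one_pos hlam
  have hlamne : lam ≠ 0 := ne_of_gt hlam0
  set W : ℝ → E3 := fun s => (X₁ s - X₂ s) + lam⁻¹ • (V₁ s - V₂ s) with hWdef
  have hWderiv : ∀ s ∈ Icc (0 : ℝ) T,
      HasDerivWithinAt W (u s (X₁ s) - u s (X₂ s)) (Icc 0 T) s := by
    intro s hs
    have h1 := (hX₁ s hs).sub (hX₂ s hs)
    have h2 := ((hV₁ s hs).sub (hV₂ s hs)).const_smul lam⁻¹
    have h3 := h1.add h2
    refine h3.congr_deriv ?_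
    rw [smul_sub, smul_smul, inv_mul_cancel₀ hlamne, one_smul, smul_smul,
      inv_mul_cancel₀ hlamne, one_smul]
    abel
  have hWc : ContinuousOn W (Icc 0 T) := fun s hs =>
    (hWderiv s hs).continuousWithinAt
  -- bound ‖X₁ s - X₂ s‖ by ‖W s‖ + 2K/lam
  have hVdiff : ∀ s ∈ Icc (0 : ℝ) T, ‖lam⁻¹ • (V₁ s - V₂ s)‖ ≤ 2 * K / lam := by
    intro s hs
    rw [norm_smul, norm_inv, Real.norm_eq_abs, abs_of_pos hlam0]
    rw [div_eq_inv_mul]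
    gcongr
    calc ‖V₁ s - V₂ s‖ ≤ ‖V₁ s‖ + ‖V₂ s‖ := norm_sub_le _ _
      _ ≤ K + K := add_le_add (hV₁bd s hs) (hV₂bd s hs)
      _ = 2 * K := by ring
  have hXW : ∀ s ∈ Icc (0 : ℝ) T, ‖X₁ s - X₂ s‖ ≤ ‖W s‖ + 2 * K / lam := by
    intro s hs
    have : X₁ s - X₂ s = W s - lam⁻¹ • (V₁ s - V₂ s) := by
      simp [hWdef]
    rw [this]
    calc ‖W s - lam⁻¹ • (V₁ s - V₂ s)‖ ≤ ‖W s‖ + ‖lam⁻¹ • (V₁ s - V₂ s)‖ :=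
        norm_sub_le _ _
      _ ≤ ‖W s‖ + 2 * K / lam := by gcongr; exact hVdiff s hs
  have h0mem : (0 : ℝ) ∈ Icc (0 : ℝ) T := ⟨le_refl _, le_of_lt hT⟩
  have hW0 : ‖W 0‖ ≤ 2 * K / lam := by
    have : W 0 = lam⁻¹ • (V₁ 0 - V₂ 0) := by
      simp [hWdef, hX₁0, hX₂0]
    rw [this]
    exact hVdiff 0 h0mem
  have hbound : ∀ s ∈ Ico (0 : ℝ) T,
      ‖u s (X₁ s) - u s (X₂ s)‖ ≤ L * ‖W s‖ + 2 * K * L / lam := by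
    intro s hs
    have hs' : s ∈ Icc (0 : ℝ) T := Ico_subset_Icc_self hs
    calc ‖u s (X₁ s) - u s (X₂ s)‖ ≤ L * ‖X₁ s - X₂ s‖ := hulip s hs' _ _
      _ ≤ L * (‖W s‖ + 2 * K / lam) := by gcongr; exact hXW s hs'
      _ = L * ‖W s‖ + 2 * K * L / lam := by ring
  have hgr := norm_le_gronwallBound_of_norm_deriv_right_le hWc
    (fun s hs => (hWderiv s (Ico_subset_Icc_self hs)).mono_of_mem_nhdsWithin
      (Icc_mem_nhdsGE_of_mem hs)) hW0 hbound
  intro t ht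
  have hWt : ‖W t‖ ≤ gronwallBound (2 * K / lam) L (2 * K * L / lam) (t - 0) :=
    hgr t ht
  have hexp : (1 : ℝ) ≤ Real.exp (L * t) := by
    have : (0 : ℝ) ≤ L * t := mul_nonneg hL ht.1
    simpa using Real.exp_le_exp.2 this
  have hfin : gronwallBound (2 * K / lam) L (2 * K * L / lam) (t - 0) + 2 * K / lam
      ≤ 4 * K / lam * Real.exp (L * t) := by
    rcases eq_or_ne L 0 with hL0 | hL0
    · simp only [hL0, gronwallBound_K0, sub_zero, mul_zero, zero_mul, zero_div,
        Real.exp_zero, mul_one, add_zero]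
      have hq : 2 * K / lam + 2 * K / lam = 4 * K / lam := by ring
      linarith
    · simp only [gronwallBound_of_K_ne_0 hL0, sub_zero]
      have h2 : 2 * K * L / lam / L = 2 * K / lam := by
        field_simp
      rw [h2]
      have heq : 2 * K / lam * Real.exp (L * t)
          + 2 * K / lam * (Real.exp (L * t) - 1) + 2 * K / lam
          = 4 * K / lam * Real.exp (L * t) := by ring
      linarith [heq.le]
  calc ‖X₁ t - X₂ t‖ ≤ ‖W t‖ + 2 * K / lam := hXW t ht
    _ ≤ gronwallBound (2 * K / lam) L (2 * K * L / lam) (t - 0) + 2 * K / lam := by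
        gcongr
    _ ≤ 4 * K / lam * Real.exp (L * t) := hfin
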